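/- arXiv:1903.11324 — 2 statements merged into one kernel-verified Lean document; each statement's English description precedes it below -/
import Mathlib

section
/- Let ν be a Borel probability measure on ℝ, v > 0, and define H(z) = z + v G_ν(z) for z ∈ ℂ⁺, where G_ν is the Stieltjes transform. The free additive convolution ρ = μ_v ⊞ ν of the semicircular law μ_v (variance v) with ν satisfies: the subordination function ω(z) = z − v G_ρ(z) is a conformal bijection from ℂ⁺ onto Ω := H⁻¹(ℂ⁺), its inverse being the restriction of H to Ω, and G_ρ(z) = G_ν(ω(z)) for all z ∈ ℂ⁺. -/
open MeasureTheory Complex Metric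

section AuxSubord

variable (μ : Measure ℝ)

lemma auxSub_ne (z : ℂ) (hz : 0 < z.im) (t : ℝ) : z - (t : ℂ) ≠ 0 := by
  intro h
  have := congrArg Complex.im h
  simp at this
  linarith

lemma auxSub_normSq_pos (z : ℂ) (hz : 0 < z.im) (t : ℝ) : 0 < Complex.normSq (z - t) :=
  Complex.normSq_pos.2 (auxSub_ne z hz t)

lemma auxSub_normSq_ge (z : ℂ) (t : ℝ) : z.im ^ 2 ≤ Complex.normSq (z - t) := by
  have h : (z - (t:ℂ)).im = z.im := by simp
  have h2 : (0:ℝ) ≤ (z - (t:ℂ)).re ^ 2 := sq_nonneg _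
  calc z.im ^ 2 = (z - (t:ℂ)).im ^ 2 := by rw [h]
    _ ≤ (z - (t:ℂ)).re ^ 2 + (z - (t:ℂ)).im ^ 2 := by linarith
    _ = Complex.normSq (z - t) := by rw [Complex.normSq_apply]; ring

lemma auxSub_norm_inv_le (z : ℂ) (hz : 0 < z.im) (t : ℝ) : ‖((z - t : ℂ))⁻¹‖ ≤ z.im⁻¹ := by
  rw [norm_inv]
  apply inv_anti₀ hz
  calc z.im = (z - (t:ℂ)).im := by simp
    _ ≤ |(z - (t:ℂ)).im| := le_abs_self _
    _ ≤ ‖z - (t:ℂ)‖ := Complex.abs_im_le_norm _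
    _ = ‖z - (t:ℂ)‖ := rfl

lemma auxSub_meas (z : ℂ) : AEStronglyMeasurable (fun t : ℝ => ((z - t:ℂ))⁻¹) μ :=
  ((Complex.measurable_ofReal.const_sub z).inv).aestronglyMeasurable

variable [IsProbabilityMeasure μ]

lemma auxSub_integrable (z : ℂ) (hz : 0 < z.im) :
    Integrable (fun t : ℝ => ((z - t:ℂ))⁻¹) μ := by
  refine (integrable_const (z.im⁻¹)).mono' (auxSub_meas μ z) ?_
  filter_upwards with t
  simpa using auxSub_norm_inv_le z hz t

lemma auxSub_meas_nsq (z : ℂ) :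
    AEStronglyMeasurable (fun t : ℝ => (Complex.normSq (z - t))⁻¹) μ :=
  ((Complex.continuous_normSq.comp
    (continuous_const.sub Complex.continuous_ofReal)).measurable.inv).aestronglyMeasurable

lemma auxSub_integrable_nsq (z : ℂ) (hz : 0 < z.im) :
    Integrable (fun t : ℝ => (Complex.normSq (z - t))⁻¹) μ := by
  refine (integrable_const ((z.im ^ 2)⁻¹)).mono' (auxSub_meas_nsq μ z) ?_
  filter_upwards with t
  rw [Real.norm_eq_abs, _root_.abs_of_nonneg (inv_nonneg.2 (Complex.normSq_nonneg _))]
  exact inv_anti₀ (by positivity) (auxSub_normSq_ge z t)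

lemma auxSub_imG (z : ℂ) (hz : 0 < z.im) :
    (∫ t : ℝ, ((z - t:ℂ))⁻¹ ∂μ).im = -z.im * ∫ t : ℝ, (Complex.normSq (z - t))⁻¹ ∂μ := by
  have h1 := integral_im (𝕜 := ℂ) (auxSub_integrable μ z hz)
  simp only [RCLike.im_to_complex] at h1
  rw [← h1, ← integral_const_mul]
  congr 1 with t
  rw [Complex.inv_im]
  simp [div_eq_mul_inv]

lemma auxSub_N_pos (z : ℂ) (hz : 0 < z.im) :
    0 < ∫ t : ℝ, (Complex.normSq (z - t))⁻¹ ∂μ := by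
  rw [integral_pos_iff_support_of_nonneg
    (fun t => le_of_lt (inv_pos.2 (auxSub_normSq_pos z hz t))) (auxSub_integrable_nsq μ z hz)]
  have : Function.support (fun t : ℝ => (Complex.normSq (z - t))⁻¹) = Set.univ := by
    ext t
    simp only [Function.mem_support, Set.mem_univ, iff_true]
    exact ne_of_gt (inv_pos.2 (auxSub_normSq_pos z hz t))
  rw [this]
  simp

lemma auxSub_im_omega (v : ℝ) (hv : 0 < v) (z : ℂ) (hz : 0 < z.im) :
    0 < (z - (v:ℂ) * ∫ t : ℝ, ((z - t:ℂ))⁻¹ ∂μ).im := by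
  have hG := auxSub_imG μ z hz
  have hN := auxSub_N_pos μ z hz
  have he : (z - (v:ℂ) * ∫ t:ℝ, ((z - t:ℂ))⁻¹ ∂μ).im
      = z.im - v * (∫ t:ℝ, ((z - t:ℂ))⁻¹ ∂μ).im := by
    simp [Complex.sub_im, Complex.mul_im]
  rw [he, hG]
  nlinarith [mul_pos hv (mul_pos hz hN)]

lemma auxSub_integrable_prod (a b : ℂ) (ha : 0 < a.im) (hb : 0 < b.im) :
    Integrable (fun t : ℝ => ((a - t:ℂ))⁻¹ * ((b - t:ℂ))⁻¹) μ := by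
  refine (integrable_const (a.im⁻¹ * b.im⁻¹)).mono'
    (((Complex.measurable_ofReal.const_sub a).inv.mul
      (Complex.measurable_ofReal.const_sub b).inv).aestronglyMeasurable) ?_
  filter_upwards with t
  simp only [norm_mul, Real.norm_eq_abs]
  exact mul_le_mul (auxSub_norm_inv_le a ha t) (auxSub_norm_inv_le b hb t) (norm_nonneg _)
    (le_of_lt (inv_pos.2 ha))

omit [IsProbabilityMeasure μ] in
lemma auxSub_vN_lt_one [IsProbabilityMeasure μ] (v : ℝ) (hv : 0 < v) (z u : ℂ) (hz : 0 < z.im)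
    (hζ : 0 < (z - v*u).im)
    (h : u = ∫ t : ℝ, ((z - v*u) - t)⁻¹ ∂μ) :
    v * ∫ t : ℝ, (Complex.normSq ((z - v*u) - t))⁻¹ ∂μ < 1 := by
  set ζ := z - (v:ℂ)*u with hζdef
  set N := ∫ t : ℝ, (Complex.normSq (ζ - t))⁻¹ ∂μ with hN
  have him : u.im = -ζ.im * N := by rw [h]; exact auxSub_imG μ ζ hζ
  have hζim : ζ.im = z.im - v * u.im := by
    simp [hζdef, Complex.sub_im, Complex.mul_im]
  have key : ζ.im * (1 - v * N) = z.im := by rw [him] at hζim; linarith [hζim]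
  nlinarith [auxSub_N_pos μ ζ hζ]

lemma auxSub_amgm (x y : ℝ) (hx : 0 < x) (hy : 0 < y) :
    (x * y)⁻¹ ≤ ((x^2)⁻¹ + (y^2)⁻¹)/2 := by
  have hx' := inv_pos.2 hx
  have hy' := inv_pos.2 hy
  have key : x⁻¹ * y⁻¹ ≤ ((x⁻¹)^2 + (y⁻¹)^2)/2 := by nlinarith [sq_nonneg (x⁻¹ - y⁻¹)]
  rw [mul_inv]
  simpa [inv_pow] using key

lemma auxSub_uniq (v : ℝ) (hv : 0 < v) (z u₁ u₂ : ℂ) (hz : 0 < z.im)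
    (hζ₁ : 0 < (z - v*u₁).im) (hζ₂ : 0 < (z - v*u₂).im)
    (h₁ : u₁ = ∫ t : ℝ, ((z - v*u₁) - t)⁻¹ ∂μ)
    (h₂ : u₂ = ∫ t : ℝ, ((z - v*u₂) - t)⁻¹ ∂μ) : u₁ = u₂ := by
  by_contra hne
  set ζ₁ := z - (v:ℂ)*u₁ with hz1
  set ζ₂ := z - (v:ℂ)*u₂ with hz2
  have hsub : u₁ - u₂ = ∫ t : ℝ, (((ζ₁ - t:ℂ))⁻¹ - ((ζ₂ - t:ℂ))⁻¹) ∂μ := by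
    rw [integral_sub (auxSub_integrable μ ζ₁ hζ₁) (auxSub_integrable μ ζ₂ hζ₂), ← h₁, ← h₂]
  have hpt : ∀ t : ℝ, ((ζ₁ - t:ℂ))⁻¹ - ((ζ₂ - t:ℂ))⁻¹
      = ((v:ℂ)*(u₁ - u₂)) * (((ζ₁ - t:ℂ))⁻¹ * ((ζ₂ - t:ℂ))⁻¹) := by
    intro t
    have e : ζ₂ - t - (ζ₁ - t) = (v:ℂ)*(u₁ - u₂) := by rw [hz1, hz2]; ring
    field_simp [auxSub_ne ζ₁ hζ₁ t, auxSub_ne ζ₂ hζ₂ t]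
    rw [← e]
  set I := ∫ t : ℝ, ((ζ₁ - t:ℂ))⁻¹ * ((ζ₂ - t:ℂ))⁻¹ ∂μ with hI
  have hEq : u₁ - u₂ = ((v:ℂ)*(u₁ - u₂)) * I := by
    conv_lhs => rw [hsub]
    rw [hI, ← integral_const_mul]
    exact integral_congr_ae (Filter.Eventually.of_forall hpt)
  have hd : u₁ - u₂ ≠ 0 := sub_ne_zero.2 hne
  have hvI : (v:ℂ) * I = 1 := by
    have : (u₁ - u₂) * ((v:ℂ) * I - 1) = 0 := by linear_combination -hEq
    rcases mul_eq_zero.1 this with h | h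
    · exact absurd h hd
    · linear_combination h
  have hnorm : ‖I‖ ≤ ((∫ t : ℝ, (Complex.normSq (ζ₁ - t))⁻¹ ∂μ)
      + (∫ t : ℝ, (Complex.normSq (ζ₂ - t))⁻¹ ∂μ))/2 := by
    calc ‖I‖ ≤ ∫ t : ℝ, ‖((ζ₁ - t:ℂ))⁻¹ * ((ζ₂ - t:ℂ))⁻¹‖ ∂μ :=
          norm_integral_le_integral_norm _
      _ ≤ ∫ t : ℝ, ((Complex.normSq (ζ₁ - t))⁻¹ + (Complex.normSq (ζ₂ - t))⁻¹)/2 ∂μ := by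
          refine integral_mono ((auxSub_integrable_prod μ ζ₁ ζ₂ hζ₁ hζ₂).norm) ?_ ?_
          · exact ((auxSub_integrable_nsq μ ζ₁ hζ₁).add (auxSub_integrable_nsq μ ζ₂ hζ₂)).div_const 2
          · intro t
            dsimp only
            have h1 : ‖((ζ₁ - t:ℂ))⁻¹ * ((ζ₂ - t:ℂ))⁻¹‖ = (‖(ζ₁ - t:ℂ)‖ * ‖(ζ₂ - t:ℂ)‖)⁻¹ := by
              rw [norm_mul, norm_inv, norm_inv, mul_inv]
            have h2 : Complex.normSq (ζ₁ - t) = ‖(ζ₁ - t:ℂ)‖^2 := by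
              rw [Complex.normSq_eq_norm_sq]
            have h3 : Complex.normSq (ζ₂ - t) = ‖(ζ₂ - t:ℂ)‖^2 := by
              rw [Complex.normSq_eq_norm_sq]
            rw [h1, h2, h3]
            exact auxSub_amgm _ _ (norm_pos_iff.2 (auxSub_ne ζ₁ hζ₁ t))
              (norm_pos_iff.2 (auxSub_ne ζ₂ hζ₂ t))
      _ = _ := by
          rw [integral_div, integral_add (auxSub_integrable_nsq μ ζ₁ hζ₁)
            (auxSub_integrable_nsq μ ζ₂ hζ₂)]
  have hN1 := auxSub_vN_lt_one μ v hv z u₁ hz hζ₁ h₁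
  have hN2 := auxSub_vN_lt_one μ v hv z u₂ hz hζ₂ h₂
  have hone : (1:ℝ) = v * ‖I‖ := by
    have := congrArg norm hvI
    simpa [norm_mul, Complex.norm_real, _root_.abs_of_pos hv] using this.symm
  nlinarith [norm_nonneg I]

lemma auxSub_ball_im (z x : ℂ) (hz : 0 < z.im) (hx : x ∈ ball z (z.im/2)) : z.im/2 < x.im := by
  have h1 : ‖x - z‖ < z.im/2 := by rwa [mem_ball, dist_eq_norm] at hx
  have h2 : |x.im - z.im| ≤ ‖x - z‖ := by
    have := Complex.abs_im_le_norm (x - z)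
    simpa using this
  have := abs_lt.1 (lt_of_le_of_lt h2 h1)
  linarith [this.1]

lemma auxSub_diff (z : ℂ) (hz : 0 < z.im) :
    DifferentiableAt ℂ (fun w : ℂ => ∫ t : ℝ, ((w - t:ℂ))⁻¹ ∂μ) z := by
  have hε : 0 < z.im/2 := by linarith
  have hbound : ∀ᵐ t : ℝ ∂μ, ∀ x ∈ ball z (z.im/2),
      ‖-(((x - t:ℂ))^2)⁻¹‖ ≤ ((z.im/2)^2)⁻¹ := by
    filter_upwards with t x hx
    have him := auxSub_ball_im z x hz hx
    have hne : x - (t:ℂ) ≠ 0 := auxSub_ne x (by linarith) t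
    rw [norm_neg, norm_inv, norm_pow]
    apply inv_anti₀ (by positivity)
    have hle : z.im/2 ≤ ‖x - (t:ℂ)‖ := by
      calc z.im/2 ≤ x.im := le_of_lt him
        _ = (x - (t:ℂ)).im := by simp
        _ ≤ |(x - (t:ℂ)).im| := le_abs_self _
        _ ≤ ‖x - (t:ℂ)‖ := Complex.abs_im_le_norm _
        _ = ‖x - (t:ℂ)‖ := rfl
    exact pow_le_pow_left₀ (le_of_lt hε) hle 2
  have hderiv : ∀ᵐ t : ℝ ∂μ, ∀ x ∈ ball z (z.im/2),
      HasDerivAt (fun w : ℂ => ((w - t:ℂ))⁻¹) (-(((x - t:ℂ))^2)⁻¹) x := by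
    filter_upwards with t x hx
    have him := auxSub_ball_im z x hz hx
    have hne : x - (t:ℂ) ≠ 0 := auxSub_ne x (by linarith) t
    have hdd := ((hasDerivAt_id x).sub_const (t:ℂ)).inv hne
    exact hdd.congr_deriv (by simp [div_eq_mul_inv])
  obtain ⟨-, hd⟩ := hasDerivAt_integral_of_dominated_loc_of_deriv_le
    (F := fun (w : ℂ) (t : ℝ) => ((w - t:ℂ))⁻¹)
    (F' := fun (w : ℂ) (t : ℝ) => -(((w - t:ℂ))^2)⁻¹)
    (x₀ := z) (bound := fun _ : ℝ => ((z.im/2)^2)⁻¹) (ball_mem_nhds z hε)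
    (Filter.Eventually.of_forall fun x => auxSub_meas μ x)
    (auxSub_integrable μ z hz)
    (((Complex.measurable_ofReal.const_sub z).pow_const 2).inv.neg.aestronglyMeasurable)
    hbound (integrable_const _) hderiv
  exact hd.differentiableAt

end AuxSubord

/-- Biane's subordination for free convolution with a semicircular law: if `ρ = μ_v ⊞ ν` is
the unique probability measure satisfying the Pastur equation `G_ρ(z) = G_ν(z − v G_ρ(z))`
on `ℂ⁺`, then `ω(z) = z − v G_ρ(z)` is an analytic bijection from `ℂ⁺` onto
`Ω = H⁻¹(ℂ⁺)` where `H(w) = w + v G_ν(w)`, its inverse is the restriction of `H` to `Ω`,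
and `G_ρ(z) = G_ν(ω(z))` on `ℂ⁺`. -/
theorem subordination_semicircular (ν ρ : Measure ℝ) [IsProbabilityMeasure ν]
    [IsProbabilityMeasure ρ] (v : ℝ) (hv : 0 < v)
    (Gν Gρ : ℂ → ℂ)
    (hGν : Gν = fun z => ∫ t : ℝ, (z - (t : ℂ))⁻¹ ∂ν)
    (hGρ : Gρ = fun z => ∫ t : ℝ, (z - (t : ℂ))⁻¹ ∂ρ)
    (hPastur : ∀ z : ℂ, 0 < z.im → Gρ z = Gν (z - v * Gρ z))
    (H : ℂ → ℂ) (hH : H = fun w => w + v * Gν w)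
    (ω : ℂ → ℂ) (hω : ω = fun z => z - v * Gρ z)
    (Upper Ω' : Set ℂ) (hU : Upper = {z : ℂ | 0 < z.im})
    (hΩ' : Ω' = {w ∈ Upper | 0 < (H w).im}) :
    Set.BijOn ω Upper Ω' ∧ DifferentiableOn ℂ ω Upper ∧
    (∀ z ∈ Upper, H (ω z) = z) ∧ (∀ w ∈ Ω', ω (H w) = w) ∧
    ∀ z ∈ Upper, Gρ z = Gν (ω z) := by
  have hGρz : ∀ z : ℂ, Gρ z = ∫ t : ℝ, (z - (t : ℂ))⁻¹ ∂ρ := fun z => by rw [hGρ]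
  have hGνz : ∀ z : ℂ, Gν z = ∫ t : ℝ, (z - (t : ℂ))⁻¹ ∂ν := fun z => by rw [hGν]
  have hHw : ∀ w : ℂ, H w = w + v * Gν w := fun w => by rw [hH]
  have hωz : ∀ z : ℂ, ω z = z - v * Gρ z := fun z => by rw [hω]
  have hUz : ∀ z : ℂ, z ∈ Upper ↔ 0 < z.im := fun z => by rw [hU]; rfl
  have hΩz : ∀ w : ℂ, w ∈ Ω' ↔ 0 < w.im ∧ 0 < (H w).im := fun w => by
    rw [hΩ', hU]; exact Iff.rfl
  -- imaginary part of z - v Gρ z is positive on the upper half plane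
  have hωim : ∀ z : ℂ, 0 < z.im → 0 < (ω z).im := by
    intro z hz
    rw [hωz z, hGρz z]
    exact auxSub_im_omega ρ v hv z hz
  -- similarly for ν in place of ρ
  have hωνim : ∀ z : ℂ, 0 < z.im → 0 < (z - v * Gν z).im := by
    intro z hz
    rw [hGνz z]
    exact auxSub_im_omega ν v hv z hz
  -- left inverse: H ∘ ω = id on Upper
  have hLeft : ∀ z : ℂ, 0 < z.im → H (ω z) = z := by
    intro z hz
    rw [hHw, hωz, ← hPastur z hz]
    ring
  -- right inverse: ω ∘ H = id on Ω'
  have hRight : ∀ w : ℂ, 0 < w.im → 0 < (H w).im → ω (H w) = w := by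
    intro w hw hHwim
    have ez : H w = w + v * Gν w := hHw w
    have hz : 0 < (H w).im := hHwim
    have hwEq : H w - v * Gν w = w := by rw [ez]; ring
    have hζ₁ : 0 < (H w - v * Gρ (H w)).im := by
      have := hωim (H w) hz
      rwa [hωz (H w)] at this
    have hζ₂ : 0 < (H w - v * Gν w).im := by rw [hwEq]; exact hw
    have h₁ : Gρ (H w) = ∫ t : ℝ, ((H w - v * Gρ (H w)) - (t:ℂ))⁻¹ ∂ν := by
      conv_lhs => rw [hPastur (H w) hz, hGν]
    have h₂ : Gν w = ∫ t : ℝ, ((H w - v * Gν w) - (t:ℂ))⁻¹ ∂ν := by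
      rw [hwEq, hGνz w]
    have huniq := auxSub_uniq ν v hv (H w) (Gρ (H w)) (Gν w) hz hζ₁ hζ₂ h₁ h₂
    rw [hωz (H w), huniq, hwEq]
  refine ⟨⟨?_, ?_, ?_⟩, ?_, ?_, ?_, ?_⟩
  · -- MapsTo
    intro z hz
    rw [hUz] at hz
    rw [hΩz]
    exact ⟨hωim z hz, by rw [hLeft z hz]; exact hz⟩
  · -- InjOn
    intro a ha b hb hab
    rw [hUz] at ha hb
    have := congrArg H hab
    rwa [hLeft a ha, hLeft b hb] at this
  · -- SurjOn
    intro w hw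
    rw [hΩz] at hw
    refine ⟨H w, ?_, hRight w hw.1 hw.2⟩
    rw [hUz]
    exact hw.2
  · -- DifferentiableOn
    intro z hz
    rw [hUz] at hz
    apply DifferentiableAt.differentiableWithinAt
    have hd : DifferentiableAt ℂ (fun w : ℂ => w - v * ∫ t : ℝ, (w - (t:ℂ))⁻¹ ∂ρ) z :=
      differentiableAt_fun_id.sub ((auxSub_diff ρ z hz).const_mul _)
    have : ω = fun w : ℂ => w - v * ∫ t : ℝ, (w - (t:ℂ))⁻¹ ∂ρ := by
      rw [hω, hGρ]
    rw [this]
    exact hd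
  · -- left inverse
    intro z hz
    rw [hUz] at hz
    exact hLeft z hz
  · -- right inverse
    intro w hw
    rw [hΩz] at hw
    exact hRight w hw.1 hw.2
  · -- subordination identity
    intro z hz
    rw [hUz] at hz
    rw [hωz z]
    exact hPastur z hz
end

section
/- With ρ_N the free convolution μ_{Nσ_N²} ⊞ ν_N, β_N(z) := N(E[G_{μ_N}(z)] − G_{ρ_N}(z)) the bias of the Stieltjes transform of the empirical spectral measure μ_N of X_N = W_N + D_N, and R̃(z) := ((z − σ_N² E[Tr R_N(z)])I − D_N)⁻¹, there is a polynomial P_N of degree 5 with coefficients bounded uniformly in N such that |β_N(z)| ≤ N⁻¹ P_N(|Im z|⁻¹) Σ_{k=1}^N |R̃(z)_{kk}|² for all z ∈ ℂ \ ℝ, assuming |β̃_N(z)| := |E[Tr R_N(z)] − Tr R̃(z)| ≤ N⁻¹ P̃_N(|Im z|⁻¹) Σ_k |R̃(z)_{kk}|² for a degree-3 polynomial P̃_N with bounded coefficients. -/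
open MeasureTheory Finset

lemma HTaux.norm_inv_le (z : ℂ) (t : ℝ) (hz : z.im ≠ 0) : ‖(z - (t:ℂ))⁻¹‖ ≤ |z.im|⁻¹ := by
  rw [norm_inv]
  apply inv_anti₀ (abs_pos.2 hz)
  calc |z.im| = |(z - (t:ℂ)).im| := by simp
    _ ≤ ‖z - (t:ℂ)‖ := by exact Complex.abs_im_le_norm _

lemma HTaux.sub_ne (z : ℂ) (t : ℝ) (hz : z.im ≠ 0) : z - (t:ℂ) ≠ 0 := by
  intro h
  apply hz
  have := congrArg Complex.im h
  simpa using this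

lemma HTaux.integrable (μ : Measure ℝ) [IsProbabilityMeasure μ] (z : ℂ) (hz : z.im ≠ 0) :
    Integrable (fun t : ℝ => (z - (t:ℂ))⁻¹) μ := by
  apply (integrable_const (|z.im|⁻¹)).mono'
  · apply Continuous.aestronglyMeasurable
    exact (continuous_const.sub (Complex.continuous_ofReal)).inv₀ fun t => HTaux.sub_ne z t hz
  · filter_upwards with t using HTaux.norm_inv_le z t hz

lemma HTaux.norm_G_le (μ : Measure ℝ) [IsProbabilityMeasure μ] (z : ℂ) (hz : z.im ≠ 0) :
    ‖∫ t : ℝ, (z - (t:ℂ))⁻¹ ∂μ‖ ≤ |z.im|⁻¹ := by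
  have := norm_integral_le_of_norm_le_const (μ := μ)
    (f := fun t : ℝ => (z - (t:ℂ))⁻¹) (C := |z.im|⁻¹)
    (by filter_upwards with t using HTaux.norm_inv_le z t hz)
  simpa using this

lemma HTaux.im_G_nonpos (μ : Measure ℝ) [IsProbabilityMeasure μ] (z : ℂ) (hz : 0 < z.im) :
    (∫ t : ℝ, (z - (t:ℂ))⁻¹ ∂μ).im ≤ 0 := by
  have h := integral_im (μ := μ) (f := fun t : ℝ => (z - (t:ℂ))⁻¹)
    (HTaux.integrable μ z hz.ne')
  rw [show (RCLike.im : ℂ → ℝ) = Complex.im from rfl] at h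
  rw [← h]
  apply integral_nonpos
  intro t
  simp only [Complex.inv_im]
  apply div_nonpos_of_nonpos_of_nonneg
  · simp [hz.le]
  · exact Complex.normSq_nonneg _

lemma HTaux.G_diff_le (μ : Measure ℝ) [IsProbabilityMeasure μ] (z z' : ℂ)
    (hz : z.im ≠ 0) (hz' : z'.im ≠ 0) :
    ‖(∫ t : ℝ, (z' - (t:ℂ))⁻¹ ∂μ) - ∫ t : ℝ, (z - (t:ℂ))⁻¹ ∂μ‖
      ≤ ‖z - z'‖ * (|z'.im|⁻¹ * |z.im|⁻¹) := by
  rw [← integral_sub (HTaux.integrable μ z' hz') (HTaux.integrable μ z hz)]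
  have := norm_integral_le_of_norm_le_const (μ := μ)
    (f := fun t : ℝ => (z' - (t:ℂ))⁻¹ - (z - (t:ℂ))⁻¹)
    (C := ‖z - z'‖ * (|z'.im|⁻¹ * |z.im|⁻¹)) ?_
  · simpa using this
  filter_upwards with t
  have h1 : (z' - (t:ℂ))⁻¹ - (z - (t:ℂ))⁻¹
      = (z - z') * ((z' - (t:ℂ))⁻¹ * (z - (t:ℂ))⁻¹) := by
    rw [inv_sub_inv (HTaux.sub_ne z' t hz') (HTaux.sub_ne z t hz)]
    rw [show z - (t:ℂ) - (z' - (t:ℂ)) = z - z' from by ring]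
    rw [div_eq_mul_inv, mul_inv]
  rw [h1, norm_mul, norm_mul]
  gcongr
  · exact HTaux.norm_inv_le z' t hz'
  · exact HTaux.norm_inv_le z t hz

lemma HTaux.integral_conj_eq (μ : Measure ℝ) (z : ℂ) :
    ∫ t : ℝ, ((starRingEnd ℂ) z - (t:ℂ))⁻¹ ∂μ = (starRingEnd ℂ) (∫ t : ℝ, (z - (t:ℂ))⁻¹ ∂μ) := by
  rw [← integral_conj]
  congr 1
  ext t
  simp [map_inv₀, map_sub, Complex.conj_ofReal]

/-- Bound on the bias of the Stieltjes transform (Haagerup–Thorbjørnsen trick): with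
`β_N(z) = N(E[G_{μ_N}(z)] − G_{ρ_N}(z))` (here `Gκ N = E[G_{μ_N}]` is the Stieltjes
transform of the mean spectral measure `κ N`, `ρ N = μ_{Nσ_N²} ⊞ ν_N` is characterized by
the subordination function `ω N` inverting `H N(w) = w + Nσ_N² G_{ν_N}(w)`), with
`ω̃ N z = z − Nσ_N² Gκ N z`, `S N z = Σ_k |R̃(z)_{kk}|² = Σ_k |(ω̃ N z − D_k)⁻¹|²`, and
assuming the bound `|β̃_N(z)| ≤ N⁻¹ P̃_N(|Im z|⁻¹) S N z` on
`β̃_N(z) = N(Gκ N z − G_{ν_N}(ω̃ N z)) = E[Tr R_N(z)] − Tr R̃(z)` with `P̃_N` of degree `3`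
with uniformly bounded coefficients, there is a family `P_N` of polynomials of degree `5`
with uniformly bounded coefficients such that
`|β_N(z)| ≤ N⁻¹ P_N(|Im z|⁻¹) S N z` for all `z ∉ ℝ`. -/
theorem bias_stieltjes_bound
    (σ2 : ℕ → ℝ) (hσpos : ∀ N, 0 ≤ σ2 N) (cσ : ℝ) (hσ : ∀ N : ℕ, (N : ℝ) * σ2 N ≤ cσ)
    (D : (N : ℕ) → Fin N → ℝ)
    (κ ρ : ℕ → Measure ℝ)
    (hκ : ∀ N, IsProbabilityMeasure (κ N)) (hρ : ∀ N, IsProbabilityMeasure (ρ N))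
    (Gν : ℕ → ℂ → ℂ)
    (hGν : ∀ N z, Gν N z = (N : ℂ)⁻¹ * ∑ j : Fin N, (z - ((D N j : ℝ) : ℂ))⁻¹)
    (Gκ : ℕ → ℂ → ℂ) (hGκ : ∀ N z, Gκ N z = ∫ t : ℝ, (z - (t : ℂ))⁻¹ ∂κ N)
    (Gρ : ℕ → ℂ → ℂ) (hGρ : ∀ N z, Gρ N z = ∫ t : ℝ, (z - (t : ℂ))⁻¹ ∂ρ N)
    (H : ℕ → ℂ → ℂ) (hH : ∀ N w, H N w = w + ((N : ℝ) * σ2 N : ℝ) * Gν N w)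
    (ω : ℕ → ℂ → ℂ)
    (hsub : ∀ N : ℕ, ∀ z : ℂ, 0 < z.im →
      Gρ N z = Gν N (ω N z) ∧ H N (ω N z) = z ∧ 0 < (ω N z).im)
    (hinv : ∀ N : ℕ, ∀ w : ℂ, 0 < w.im → 0 < (H N w).im → ω N (H N w) = w)
    (ωt : ℕ → ℂ → ℂ) (hωt : ∀ N z, ωt N z = z - ((N : ℝ) * σ2 N : ℝ) * Gκ N z)
    (βt β : ℕ → ℂ → ℂ)
    (hβt : ∀ N z, βt N z = (N : ℂ) * (Gκ N z - Gν N (ωt N z)))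
    (hβ : ∀ N z, β N z = (N : ℂ) * (Gκ N z - Gρ N z))
    (S : ℕ → ℂ → ℝ) (hS : ∀ N z, S N z = ∑ j : Fin N, ‖(ωt N z - ((D N j : ℝ) : ℂ))⁻¹‖ ^ 2)
    (Pt : ℕ → Polynomial ℝ) (hPtdeg : ∀ N, (Pt N).natDegree ≤ 3)
    (cPt : ℝ) (hPtcoeff : ∀ N i, |(Pt N).coeff i| ≤ cPt)
    (hPtbound : ∀ N : ℕ, 1 ≤ N → ∀ z : ℂ, z.im ≠ 0 →
      ‖βt N z‖ ≤ (N : ℝ)⁻¹ * (Pt N).eval |z.im|⁻¹ * S N z) :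
    ∃ P : ℕ → Polynomial ℝ, (∀ N, (P N).natDegree ≤ 5) ∧
      (∃ cP : ℝ, ∀ N i, |(P N).coeff i| ≤ cP) ∧
      ∀ N : ℕ, 1 ≤ N → ∀ z : ℂ, z.im ≠ 0 →
        ‖β N z‖ ≤ (N : ℝ)⁻¹ * (P N).eval |z.im|⁻¹ * S N z := by
  have hcσ : 0 ≤ cσ := by have := hσ 0; simpa using this
  have hcPt0 : 0 ≤ cPt := le_trans (abs_nonneg _) (hPtcoeff 0 0)
  refine ⟨fun N => Pt N + (Polynomial.C (4*cσ) * Pt N) * Polynomial.X ^ 2, ?_, ?_, ?_⟩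
  · intro N
    apply le_trans (Polynomial.natDegree_add_le _ _)
    rw [max_le_iff]
    refine ⟨le_trans (hPtdeg N) (by norm_num), ?_⟩
    apply le_trans Polynomial.natDegree_mul_le
    have h1 : (Polynomial.C (4*cσ) * Pt N).natDegree ≤ 3 := by
      refine le_trans Polynomial.natDegree_mul_le ?_
      rw [Polynomial.natDegree_C, Nat.zero_add]
      exact hPtdeg N
    have h2 : ((Polynomial.X : Polynomial ℝ) ^ 2).natDegree ≤ 2 := by
      simp [Polynomial.natDegree_X_pow]
    omega
  · refine ⟨cPt + 4*cσ*cPt, ?_⟩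
    intro N i
    rw [Polynomial.coeff_add, Polynomial.coeff_mul_X_pow']
    apply le_trans (abs_add_le _ _)
    by_cases h : 2 ≤ i
    · simp only [h, if_true, Polynomial.coeff_C_mul]
      have h2 := hPtcoeff N (i-2)
      have h3 : |4*cσ * (Pt N).coeff (i-2)| ≤ 4*cσ*cPt := by
        rw [abs_mul, abs_of_nonneg (by positivity : (0:ℝ) ≤ 4*cσ)]
        exact mul_le_mul_of_nonneg_left h2 (by positivity)
      have h1 := hPtcoeff N i
      linarith
    · simp only [h, if_false, abs_zero, add_zero]
      have h1 := hPtcoeff N i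
      nlinarith
  · intro N hN z hz
    haveI := hκ N; haveI := hρ N
    have key : ∀ w : ℂ, 0 < w.im →
        ‖β N w‖ ≤ (N:ℝ)⁻¹ *
          (Pt N + (Polynomial.C (4*cσ) * Pt N) * Polynomial.X ^ 2).eval |w.im|⁻¹ * S N w := by
      intro w hw
      set x : ℝ := |w.im|⁻¹ with hxdef
      have hxw : x = (w.im)⁻¹ := by rw [hxdef, abs_of_pos hw]
      have hx0 : 0 < x := by rw [hxw]; positivity
      set B : ℝ := (N:ℝ)⁻¹ * (Pt N).eval x * S N w with hBdef
      have hβtB : ‖βt N w‖ ≤ B := hPtbound N hN w hw.ne'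
      have hB0 : 0 ≤ B := le_trans (norm_nonneg _) hβtB
      have hσB0 : 0 ≤ σ2 N * B := mul_nonneg (hσpos N) hB0
      have hRHS : (N:ℝ)⁻¹ *
          (Pt N + (Polynomial.C (4*cσ) * Pt N) * Polynomial.X ^ 2).eval x * S N w
          = B + 4*cσ*x^2*B := by
        simp only [Polynomial.eval_add, Polynomial.eval_mul, Polynomial.eval_C,
          Polynomial.eval_pow, Polynomial.eval_X, hBdef]
        ring
      rw [hRHS]
      have himGκ : (Gκ N w).im ≤ 0 := by
        rw [hGκ]; exact HTaux.im_G_nonpos _ w hw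
      have hNσ : 0 ≤ (N:ℝ) * σ2 N := mul_nonneg (Nat.cast_nonneg N) (hσpos N)
      have hωtim : w.im ≤ (ωt N w).im := by
        have h1 : (ωt N w).im = w.im - ((N:ℝ) * σ2 N) * (Gκ N w).im := by
          rw [hωt]; simp [Complex.sub_im, Complex.mul_im]
        have h2 := mul_nonneg hNσ (neg_nonneg.2 himGκ)
        rw [h1]; nlinarith
      set z' : ℂ := H N (ωt N w) with hz'def
      have hNne : (N:ℂ) ≠ 0 := Nat.cast_ne_zero.2 (by omega)
      have hz'sub : z' - w = -((σ2 N : ℂ)) * βt N w := by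
        rw [hz'def, hH, hωt, hβt, hωt]
        push_cast
        ring
      have hz'norm : ‖z' - w‖ ≤ σ2 N * B := by
        rw [hz'sub, norm_mul, norm_neg, Complex.norm_real, Real.norm_eq_abs,
          abs_of_nonneg (hσpos N)]
        exact mul_le_mul_of_nonneg_left hβtB (hσpos N)
      by_cases hcase : σ2 N * B < w.im / 2
      · -- subordination case
        have him' : w.im / 2 < z'.im := by
          have h1 : |(z' - w).im| ≤ ‖z' - w‖ := by
            exact Complex.abs_im_le_norm _
          have h2 : (z' - w).im = z'.im - w.im := Complex.sub_im _ _
          have h3 := neg_abs_le (z' - w).im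
          linarith
        have hz'pos : 0 < z'.im := by linarith
        have hωtpos : 0 < (ωt N w).im := lt_of_lt_of_le hw hωtim
        have hωeq : ω N z' = ωt N w := hinv N (ωt N w) hωtpos hz'pos
        have hGρz' : Gρ N z' = Gν N (ωt N w) := by
          have h := (hsub N z' hz'pos).1
          rw [hωeq] at h; exact h
        have hsplit : β N w = βt N w + (N:ℂ) * (Gρ N z' - Gρ N w) := by
          rw [hβ, hβt, hGρz']; ring
        have hdiff : ‖Gρ N z' - Gρ N w‖ ≤ ‖w - z'‖ * (|z'.im|⁻¹ * |w.im|⁻¹) := by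
          rw [hGρ, hGρ]; exact HTaux.G_diff_le (ρ N) w z' hw.ne' hz'pos.ne'
        have hz'iminv : |z'.im|⁻¹ ≤ 2 * x := by
          have he : (w.im/2)⁻¹ = 2 * x := by
            rw [hxw]; rw [inv_div]; ring
          rw [abs_of_pos hz'pos, ← he]
          exact inv_anti₀ (by linarith) him'.le
        have hdiff2 : ‖Gρ N z' - Gρ N w‖ ≤ (σ2 N * B) * ((2*x) * x) := by
          refine hdiff.trans ?_
          have h1 : ‖w - z'‖ ≤ σ2 N * B := by rw [norm_sub_rev]; exact hz'norm
          have h2 : |z'.im|⁻¹ * |w.im|⁻¹ ≤ (2*x) * x := by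
            rw [← hxdef]
            exact mul_le_mul_of_nonneg_right hz'iminv (le_of_lt hx0)
          exact mul_le_mul h1 h2 (by positivity) hσB0
        calc ‖β N w‖ ≤ ‖βt N w‖ + (N:ℝ) * ‖Gρ N z' - Gρ N w‖ := by
              rw [hsplit]
              refine le_trans (norm_add_le _ _) ?_
              rw [norm_mul, Complex.norm_natCast]
          _ ≤ B + (N:ℝ) * ((σ2 N * B) * ((2*x) * x)) := by
              have := mul_le_mul_of_nonneg_left hdiff2 (Nat.cast_nonneg N : (0:ℝ) ≤ N)
              linarith
          _ ≤ B + 4*cσ*x^2*B := by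
              have hσN := hσ N
              have hx2B : 0 ≤ x^2*B := mul_nonneg (sq_nonneg x) hB0
              nlinarith [mul_le_mul_of_nonneg_right hσN hx2B]
      · -- trivial bound case
        push_neg at hcase
        have htriv : ‖β N w‖ ≤ (N:ℝ) * (x + x) := by
          rw [hβ, norm_mul, Complex.norm_natCast]
          apply mul_le_mul_of_nonneg_left ?_ (Nat.cast_nonneg N : (0:ℝ) ≤ N)
          refine le_trans (norm_sub_le _ _) ?_
          have hb1 : ‖Gκ N w‖ ≤ x := by
            rw [hGκ, hxdef]; exact HTaux.norm_G_le _ w hw.ne'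
          have hb2 : ‖Gρ N w‖ ≤ x := by
            rw [hGρ, hxdef]; exact HTaux.norm_G_le _ w hw.ne'
          linarith
        have h1 : 1 ≤ 2 * (σ2 N * B) * x := by
          have h2 : w.im ≤ 2*(σ2 N * B) := by linarith
          have h3 : w.im * x = 1 := by
            rw [hxw]; field_simp
          calc (1:ℝ) = w.im * x := h3.symm
            _ ≤ 2*(σ2 N*B)*x := mul_le_mul_of_nonneg_right h2 hx0.le
        have hx2B : 0 ≤ x^2*B := mul_nonneg (sq_nonneg x) hB0
        calc ‖β N w‖ ≤ (N:ℝ)*(x+x) := htriv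
          _ ≤ (N:ℝ)*(x+x) * (2*(σ2 N*B)*x) :=
              le_mul_of_one_le_right (by positivity) h1
          _ = 4*((N:ℝ)*σ2 N)*(x^2*B) := by ring
          _ ≤ 4*cσ*(x^2*B) := by
              have := mul_le_mul_of_nonneg_right (hσ N) hx2B
              nlinarith
          _ ≤ B + 4*cσ*x^2*B := by nlinarith
    rcases lt_or_gt_of_ne hz with hneg | hpos
    · have hGκc : Gκ N ((starRingEnd ℂ) z) = (starRingEnd ℂ) (Gκ N z) := by
        rw [hGκ, hGκ]; exact HTaux.integral_conj_eq _ z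
      have hGρc : Gρ N ((starRingEnd ℂ) z) = (starRingEnd ℂ) (Gρ N z) := by
        rw [hGρ, hGρ]; exact HTaux.integral_conj_eq _ z
      have hβc : β N ((starRingEnd ℂ) z) = (starRingEnd ℂ) (β N z) := by
        rw [hβ, hβ, hGκc, hGρc]; simp
      have hωtc : ωt N ((starRingEnd ℂ) z) = (starRingEnd ℂ) (ωt N z) := by
        rw [hωt, hωt, hGκc]
        simp [map_sub, map_mul, Complex.conj_ofReal]
      have hSc : S N ((starRingEnd ℂ) z) = S N z := by
        rw [hS, hS]
        apply Finset.sum_congr rfl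
        intro j _
        rw [hωtc,
          show (starRingEnd ℂ) (ωt N z) - ((D N j : ℝ):ℂ)
            = (starRingEnd ℂ) (ωt N z - ((D N j : ℝ):ℂ)) from by
              rw [map_sub, Complex.conj_ofReal],
          ← map_inv₀]
        rw [RCLike.norm_conj]
      have him : |((starRingEnd ℂ) z).im| = |z.im| := by
        simp [Complex.conj_im]
      have h := key ((starRingEnd ℂ) z) (by simp [Complex.conj_im]; linarith)
      rw [hβc, hSc, him, RCLike.norm_conj] at h
      exact h
    · exact key z hpos
end
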